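/- Let (t_a)_{a∈A} and (t'_a)_{a∈A} be families of nonnegative reals with t_a ≤ t'_a for every a, and let z > 0. If m > 0 solves the fixed-point equation FP(t,z) and m' > 0 solves FP(t',z), then m' ≤ m (larger coefficients yield a smaller fixed-point value). -/

import Mathlib

open Finset

/-- Larger coefficients in the fixed-point equation FP(t,z) yield a
smaller positive solution. -/
theorem fixed_point_antitone_in_coefficients
    (Nt : ℕ) (hNt : 0 < Nt)
    (A : Type*) [Fintype A] [Nonempty A]
    (t t' : A → ℝ) (ht : ∀ a, 0 ≤ t a) (hle : ∀ a, t a ≤ t' a)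
    (z : ℝ) (hz : 0 < z)
    (m m' : ℝ) (hm : 0 < m) (hm' : 0 < m')
    (hfp : 1 / m = (1 / (Nt : ℝ)) * ∑ a, t a / (1 + t a * m) + z)
    (hfp' : 1 / m' = (1 / (Nt : ℝ)) * ∑ a, t' a / (1 + t' a * m') + z) :
    m' ≤ m := by
  by_contra hcon
  push_neg at hcon
  have hN : (0:ℝ) < (Nt:ℝ) := Nat.cast_pos.mpr hNt
  have ht' : ∀ a, 0 ≤ t' a := fun a => le_trans (ht a) (hle a)
  have hd1 : ∀ a, 0 < 1 + t a * m := fun a => by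
    have := ht a; positivity
  have hd2 : ∀ a, 0 < 1 + t' a * m' := fun a => by
    have := ht' a; positivity
  -- termwise estimate A
  have key1 : ∀ a, t a/(1+t a*m) - t' a/(1+t' a*m')
      ≤ (m'-m) * (t a * t' a / ((1 + t a * m)*(1 + t' a * m'))) := by
    intro a
    have h1 := hd1 a; have h2 := hd2 a
    have heq : t a/(1+t a*m) - t' a/(1+t' a*m')
        = (t a - t' a + t a * t' a * (m'-m)) / ((1+t a*m)*(1+t' a*m')) := by
      field_simp; ring
    have heq2 : (m'-m) * (t a * t' a / ((1 + t a * m)*(1 + t' a * m')))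
        = (t a * t' a * (m'-m)) / ((1+t a*m)*(1+t' a*m')) := by ring
    rw [heq, heq2]
    apply div_le_div_of_nonneg_right ?_ (by positivity) |>.trans_eq rfl
    case _ => nlinarith [hle a]
  -- difference of the fixed point equations
  have ediff : 1/m - 1/m'
      = (1/(Nt:ℝ)) * ∑ a, (t a/(1+t a*m) - t' a/(1+t' a*m')) := by
    rw [hfp, hfp', Finset.sum_sub_distrib, mul_sub]; ring
  have hA : 1/m - 1/m'
      ≤ (m'-m) * ((1/(Nt:ℝ)) * ∑ a, t a * t' a / ((1 + t a * m)*(1 + t' a * m'))) := by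
    rw [ediff]
    have hsum : ∑ a, (t a/(1+t a*m) - t' a/(1+t' a*m'))
        ≤ ∑ a, (m'-m) * (t a * t' a / ((1 + t a * m)*(1 + t' a * m'))) :=
      Finset.sum_le_sum (fun a _ => key1 a)
    have := mul_le_mul_of_nonneg_left hsum (le_of_lt (by positivity : (0:ℝ) < 1/(Nt:ℝ)))
    calc (1/(Nt:ℝ)) * ∑ a, (t a/(1+t a*m) - t' a/(1+t' a*m'))
        ≤ (1/(Nt:ℝ)) * ∑ a, (m'-m) * (t a * t' a / ((1 + t a * m)*(1 + t' a * m'))) := this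
      _ = (m'-m) * ((1/(Nt:ℝ)) * ∑ a, t a * t' a / ((1 + t a * m)*(1 + t' a * m'))) := by
          rw [← Finset.mul_sum]; ring
  -- termwise estimate B
  have key2 : ∀ a, t a * t' a / ((1 + t a * m)*(1 + t' a * m'))
      ≤ (1/m) * (t' a/(1+t' a*m')) := by
    intro a
    have h1 := hd1 a; have h2 := hd2 a
    have heq : t a * t' a / ((1 + t a * m)*(1 + t' a * m'))
        = (t a/(1+t a*m)) * (t' a/(1+t' a*m')) := by
      rw [div_mul_div_comm]
    rw [heq]
    have ht'a := ht' a
    apply mul_le_mul_of_nonneg_right ?_ (by positivity)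
    rw [div_le_div_iff₀ h1 hm]
    nlinarith [ht a]
  have hB : (1/(Nt:ℝ)) * ∑ a, t a * t' a / ((1 + t a * m)*(1 + t' a * m'))
      ≤ (1/m) * (1/m' - z) := by
    have hsum : ∑ a, t a * t' a / ((1 + t a * m)*(1 + t' a * m'))
        ≤ ∑ a, (1/m) * (t' a/(1+t' a*m')) :=
      Finset.sum_le_sum (fun a _ => key2 a)
    have h1 := mul_le_mul_of_nonneg_left hsum (le_of_lt (by positivity : (0:ℝ) < 1/(Nt:ℝ)))
    have h2 : (1/(Nt:ℝ)) * ∑ a, (1/m) * (t' a/(1+t' a*m'))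
        = (1/m) * ((1/(Nt:ℝ)) * ∑ a, t' a/(1+t' a*m')) := by
      rw [← Finset.mul_sum]; ring
    have h3 : (1/(Nt:ℝ)) * ∑ a, t' a/(1+t' a*m') = 1/m' - z := by linarith [hfp']
    rw [h2, h3] at h1
    exact h1
  -- combine
  have hpos : (0:ℝ) < m' - m := sub_pos.mpr hcon
  have hAB : 1/m - 1/m' ≤ (m'-m) * ((1/m) * (1/m' - z)) :=
    hA.trans (mul_le_mul_of_nonneg_left hB (le_of_lt hpos))
  have hid : (m'-m) * ((1/m) * (1/m' - z)) = (1/m - 1/m') - (m'-m)*z/m := by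
    field_simp
  rw [hid] at hAB
  have : (m'-m)*z/m ≤ 0 := by linarith
  have : (0:ℝ) < (m'-m)*z/m := by positivity
  linarith
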